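/- For gl(2/2) with A_q as defined on the doubly atypical weights μ(x,y) = (x,y;−y,−x), x ≥ y, the (0,0)-row of the inverse matrix is given by (A_q^{-1})_{μ(0,0), μ(−x,−y)} = q^{x+y} for all integers y ≥ x ≥ 0 (identifying (−x,−y;y,x) with μ(−x,−y)), and 0 at all other weights. -/

import Mathlib

/-- Doubly atypical dominant weights of `gl(2/2)`: pairs `(x,y)` with `x ≥ y`,
representing `μ(x,y) = (x,y;−y,−x)`. -/
def Wt : Type := {p : ℤ × ℤ // p.2 ≤ p.1}

instance : DecidableEq Wt := fun a b =>
  decidable_of_iff (a.val = b.val) Subtype.ext_iff.symm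

open Polynomial in
/-- The matrix `A_q` of `gl(2/2)` on doubly atypical dominant weights (here `q = X`). -/
noncomputable def Aq22 (l μ : Wt) : Polynomial ℤ :=
  let q : Polynomial ℤ := X
  let x := l.val.1
  let y := l.val.2
  if x = y then
    (if μ.val = (x, y) then 1 else if μ.val = (x, y - 1) then -q else
      if μ.val = (x - 2, y - 2) then q ^ 2 else 0)
  else if x = y + 1 then
    (if μ.val = (x, y) then 1 else if μ.val = (x, y - 1) then -q else
      if μ.val = (x - 1, y) then -q else if μ.val = (x - 2, y - 1) then -q else
      if μ.val = (x - 1, y - 1) then q ^ 2 else 0)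
  else
    (if μ.val = (x, y) then 1 else if μ.val = (x - 1, y) then -q else
      if μ.val = (x, y - 1) then -q else if μ.val = (x - 1, y - 1) then q ^ 2 else 0)

/-- The weight `μ(x,y) = (x,y;−y,−x)` as a vector in `ℤ⁴`. -/
def embWt (p : Wt) : Fin 4 → ℤ := ![p.val.1, p.val.2, -p.val.2, -p.val.1]

/-- The six positive roots of `gl(2/2)`:
`ε₁−ε₂, δ₁−δ₂, ε₁−δ₁, ε₁−δ₂, ε₂−δ₁, ε₂−δ₂`. -/
def posRoots22 : Fin 6 → Fin 4 → ℤ :=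
  ![![1, -1, 0, 0], ![0, 0, 1, -1], ![1, 0, -1, 0],
    ![1, 0, 0, -1], ![0, 1, -1, 0], ![0, 1, 0, -1]]

/-- The dominance-type partial order: `μ ≤ λ` iff `λ − μ` is a nonnegative integral
combination of positive roots. -/
def wtLE (μ l : Wt) : Prop :=
  ∃ c : Fin 6 → ℕ, embWt l - embWt μ = ∑ i, (c i : ℤ) • posRoots22 i

open Polynomial

private lemma Aq22_support {ν μ : Wt} (h : Aq22 ν μ ≠ 0) :
    ν.val = μ.val ∨ ν.val = (μ.val.1 + 1, μ.val.2) ∨ ν.val = (μ.val.1, μ.val.2 + 1) ∨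
    ν.val = (μ.val.1 + 1, μ.val.2 + 1) ∨ ν.val = (μ.val.1 + 2, μ.val.2 + 1) ∨
    ν.val = (μ.val.1 + 2, μ.val.2 + 2) := by
  unfold Aq22 at h
  simp only [] at h
  split_ifs at h with h1 h2 h3 h4 h5 h6 h7 h8 h9 h10 h11 h12 h13 <;>
    simp_all [Prod.ext_iff] <;> omega

private lemma wt_ne {a b c d : ℤ} {h : b ≤ a} {h' : d ≤ c} (hne : a ≠ c ∨ b ≠ d) :
    (⟨(a,b),h⟩ : Wt) ≠ ⟨(c,d),h'⟩ := by
  intro he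
  simp only [Subtype.mk.injEq, Prod.mk.injEq] at he
  rcases hne with hne | hne
  · exact hne he.1
  · exact hne he.2

private lemma finsum_five (f : Wt → Polynomial ℤ) (v0 v1 v2 v3 v4 : Wt)
    (h01 : v0 ≠ v1) (h02 : v0 ≠ v2) (h03 : v0 ≠ v3) (h04 : v0 ≠ v4)
    (h12 : v1 ≠ v2) (h13 : v1 ≠ v3) (h14 : v1 ≠ v4)
    (h23 : v2 ≠ v3) (h24 : v2 ≠ v4) (h34 : v3 ≠ v4)
    (hsupp : ∀ ν, f ν ≠ 0 → ν = v0 ∨ ν = v1 ∨ ν = v2 ∨ ν = v3 ∨ ν = v4) :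
    ∑ᶠ ν, f ν = f v0 + f v1 + f v2 + f v3 + f v4 := by
  rw [finsum_eq_sum_of_support_subset f (s := {v0,v1,v2,v3,v4})
    (by intro ν hν; rcases hsupp ν hν with rfl|rfl|rfl|rfl|rfl <;>
        simp [Finset.mem_insert])]
  rw [show ({v0,v1,v2,v3,v4} : Finset Wt)
      = insert v0 (insert v1 (insert v2 (insert v3 {v4}))) from rfl]
  rw [Finset.sum_insert (by simp [Finset.mem_insert, h01, h02, h03, h04]),
      Finset.sum_insert (by simp [Finset.mem_insert, h12, h13, h14]),
      Finset.sum_insert (by simp [Finset.mem_insert, h23, h24]),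
      Finset.sum_insert (by simp [Finset.mem_insert, h34]),
      Finset.sum_singleton]
  ring

private lemma finsum_six (f : Wt → Polynomial ℤ) (v0 v1 v2 v3 v4 v5 : Wt)
    (h01 : v0 ≠ v1) (h02 : v0 ≠ v2) (h03 : v0 ≠ v3) (h04 : v0 ≠ v4) (h05 : v0 ≠ v5)
    (h12 : v1 ≠ v2) (h13 : v1 ≠ v3) (h14 : v1 ≠ v4) (h15 : v1 ≠ v5)
    (h23 : v2 ≠ v3) (h24 : v2 ≠ v4) (h25 : v2 ≠ v5)
    (h34 : v3 ≠ v4) (h35 : v3 ≠ v5) (h45 : v4 ≠ v5)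
    (hsupp : ∀ ν, f ν ≠ 0 → ν = v0 ∨ ν = v1 ∨ ν = v2 ∨ ν = v3 ∨ ν = v4 ∨ ν = v5) :
    ∑ᶠ ν, f ν = f v0 + f v1 + f v2 + f v3 + f v4 + f v5 := by
  rw [finsum_eq_sum_of_support_subset f (s := {v0,v1,v2,v3,v4,v5})
    (by intro ν hν; rcases hsupp ν hν with rfl|rfl|rfl|rfl|rfl|rfl <;>
        simp [Finset.mem_insert])]
  rw [show ({v0,v1,v2,v3,v4,v5} : Finset Wt)
      = insert v0 (insert v1 (insert v2 (insert v3 (insert v4 {v5})))) from rfl]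
  rw [Finset.sum_insert (by simp [Finset.mem_insert, h01, h02, h03, h04, h05]),
      Finset.sum_insert (by simp [Finset.mem_insert, h12, h13, h14, h15]),
      Finset.sum_insert (by simp [Finset.mem_insert, h23, h24, h25]),
      Finset.sum_insert (by simp [Finset.mem_insert, h34, h35]),
      Finset.sum_insert (by simp [Finset.mem_insert, h45]),
      Finset.sum_singleton]
  ring

private lemma Aq_00 (a b : ℤ) (h h' : b ≤ a) : Aq22 ⟨(a,b),h⟩ ⟨(a,b),h'⟩ = 1 := by
  unfold Aq22; simp only []
  split_ifs <;> first | rfl | (exfalso; simp only [Prod.mk.injEq, true_and, and_true] at *; omega)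

private lemma Aq_10 (a b : ℤ) (h : b ≤ a + 1) (h' : b ≤ a) :
    Aq22 ⟨(a+1,b),h⟩ ⟨(a,b),h'⟩ = -X := by
  unfold Aq22; simp only []
  split_ifs <;> first | rfl | (exfalso; simp only [Prod.mk.injEq, true_and, and_true] at *; omega)

private lemma Aq_01 (a b : ℤ) (h : b + 1 ≤ a) (h' : b ≤ a) :
    Aq22 ⟨(a,b+1),h⟩ ⟨(a,b),h'⟩ = -X := by
  unfold Aq22; simp only []
  split_ifs <;> first | rfl | (exfalso; simp only [Prod.mk.injEq, true_and, and_true] at *; omega)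

private lemma Aq_11 (a b : ℤ) (hlt : b < a) (h : b + 1 ≤ a + 1) (h' : b ≤ a) :
    Aq22 ⟨(a+1,b+1),h⟩ ⟨(a,b),h'⟩ = X^2 := by
  unfold Aq22; simp only []
  split_ifs <;> first | rfl | (exfalso; simp only [Prod.mk.injEq, true_and, and_true] at *; omega)

private lemma Aq_11eq (b : ℤ) (h : b + 1 ≤ b + 1) (h' : b ≤ b) :
    Aq22 ⟨(b+1,b+1),h⟩ ⟨(b,b),h'⟩ = 0 := by
  unfold Aq22; simp only []
  split_ifs <;> first | rfl | (exfalso; simp only [Prod.mk.injEq, true_and, and_true] at *; omega)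

private lemma Aq_21eq (b : ℤ) (h : b + 1 ≤ b + 2) (h' : b ≤ b) :
    Aq22 ⟨(b+2,b+1),h⟩ ⟨(b,b),h'⟩ = -X := by
  unfold Aq22; simp only []
  split_ifs <;> first | rfl | (exfalso; simp only [Prod.mk.injEq, true_and, and_true] at *; omega)

private lemma Aq_21lt (a b : ℤ) (hlt : b < a) (h : b + 1 ≤ a + 2) (h' : b ≤ a) :
    Aq22 ⟨(a+2,b+1),h⟩ ⟨(a,b),h'⟩ = 0 := by
  unfold Aq22; simp only []
  split_ifs <;> first | rfl | (exfalso; simp only [Prod.mk.injEq, true_and, and_true] at *; omega)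

private lemma Aq_22eq (b : ℤ) (h : b + 2 ≤ b + 2) (h' : b ≤ b) :
    Aq22 ⟨(b+2,b+2),h⟩ ⟨(b,b),h'⟩ = X^2 := by
  unfold Aq22; simp only []
  split_ifs <;> first | rfl | (exfalso; simp only [Prod.mk.injEq, true_and, and_true] at *; omega)

private lemma Aq_22lt (a b : ℤ) (hlt : b < a) (h : b + 2 ≤ a + 2) (h' : b ≤ a) :
    Aq22 ⟨(a+2,b+2),h⟩ ⟨(a,b),h'⟩ = 0 := by
  unfold Aq22; simp only []
  split_ifs <;> first | rfl | (exfalso; simp only [Prod.mk.injEq, true_and, and_true] at *; omega)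

theorem Aq22_inverse_zero_row (B : Wt → Wt → Polynomial ℤ)
    (hBtri : ∀ l μ, ¬ wtLE μ l → B l μ = 0)
    (hAB : ∀ l μ : Wt, (∑ᶠ ν : Wt, Aq22 l ν * B ν μ) = if l = μ then 1 else 0)
    (hBA : ∀ l μ : Wt, (∑ᶠ ν : Wt, B l ν * Aq22 ν μ) = if l = μ then 1 else 0) :
    (∀ (x y : ℕ) (hxy : x ≤ y),
      B ⟨(0, 0), le_refl 0⟩ ⟨(-(x : ℤ), -(y : ℤ)), neg_le_neg (by exact_mod_cast hxy)⟩ =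
        Polynomial.X ^ (x + y)) ∧
    (∀ μ : Wt, (¬ ∃ x y : ℕ, x ≤ y ∧ μ.val = (-(x : ℤ), -(y : ℤ))) →
      B ⟨(0, 0), le_refl 0⟩ μ = 0) := by
  set l0 : Wt := ⟨(0, 0), le_refl 0⟩ with hl0
  have hpos : ∀ ν : Wt, 0 < ν.val.1 → B l0 ν = 0 := by
    intro ν hν
    apply hBtri
    rintro ⟨c, hc⟩
    have h0 := congrFun hc 0
    simp only [Pi.sub_apply, Finset.sum_apply, Pi.smul_apply, smul_eq_mul,
      Fin.sum_univ_six] at h0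
    rw [show embWt l0 0 = 0 from rfl, show embWt ν 0 = ν.val.1 from rfl,
        show posRoots22 0 0 = 1 from rfl, show posRoots22 1 0 = 0 from rfl,
        show posRoots22 2 0 = 1 from rfl, show posRoots22 3 0 = 1 from rfl,
        show posRoots22 4 0 = 0 from rfl, show posRoots22 5 0 = 0 from rfl] at h0
    omega
  have key : ∀ n : ℕ, ∀ a b : ℤ, ∀ hba : b ≤ a, a ≤ 0 → (-6*a - 2*b).toNat = n →
      B l0 ⟨(a,b), hba⟩ = X ^ (-a - b).toNat := by
    intro n
    induction n using Nat.strong_induction_on with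
    | _ n ih =>
    intro a b hba ha hn
    rcases eq_or_lt_of_le hba with rfl | hlt
    · -- diagonal case μ = (b,b)
      have hs := hBA l0 ⟨(b,b), hba⟩
      rw [finsum_five _ ⟨(b,b),hba⟩ ⟨(b+1,b), by omega⟩ ⟨(b+1,b+1), le_refl _⟩
            ⟨(b+2,b+1), by omega⟩ ⟨(b+2,b+2), le_refl _⟩
            (wt_ne (by omega)) (wt_ne (by omega)) (wt_ne (by omega)) (wt_ne (by omega))
            (wt_ne (by omega)) (wt_ne (by omega)) (wt_ne (by omega))
            (wt_ne (by omega)) (wt_ne (by omega)) (wt_ne (by omega))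
            (by
              intro ν hν
              rcases Aq22_support (right_ne_zero_of_mul hν) with h1|h1|h1|h1|h1|h1
              · exact Or.inl (Subtype.ext h1)
              · exact Or.inr (Or.inl (Subtype.ext h1))
              · exfalso
                have hp := ν.property
                rw [h1] at hp
                exact absurd (show (b:ℤ)+1 ≤ b from hp) (by omega)
              · exact Or.inr (Or.inr (Or.inl (Subtype.ext h1)))
              · exact Or.inr (Or.inr (Or.inr (Or.inl (Subtype.ext h1))))
              · exact Or.inr (Or.inr (Or.inr (Or.inr (Subtype.ext h1)))))] at hs
      rw [Aq_00, Aq_10, Aq_11eq, Aq_21eq, Aq_22eq] at hs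
      rcases lt_trichotomy b (-1) with hb | hb | hb
      · -- b ≤ -2 : all four B-values by induction
        rw [ih ((-6*(b+1) - 2*b).toNat) (by omega) (b+1) b (by omega) (by omega) rfl,
            ih ((-6*(b+2) - 2*(b+1)).toNat) (by omega) (b+2) (b+1) (by omega) (by omega) rfl,
            ih ((-6*(b+2) - 2*(b+2)).toNat) (by omega) (b+2) (b+2) (by omega) (by omega) rfl,
            if_neg (show ¬ l0 = ⟨(b,b),hba⟩ by rw [hl0]; exact wt_ne (by omega))] at hs
        rw [show (-(b+1) - b).toNat = (-b-b-4).toNat + 3 from by omega,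
            show (-(b+2) - (b+1)).toNat = (-b-b-4).toNat + 1 from by omega,
            show (-(b+2) - (b+2)).toNat = (-b-b-4).toNat from by omega] at hs
        rw [show (-b - b).toNat = (-b-b-4).toNat + 4 from by omega]
        linear_combination hs
      · -- b = -1
        subst hb
        rw [ih ((-6*((-1:ℤ)+1) - 2*(-1)).toNat) (by omega) ((-1)+1) (-1) (by omega)
              (by omega) rfl,
            hpos ⟨((-1:ℤ)+2,(-1:ℤ)+1), by omega⟩ (show (0:ℤ) < (-1:ℤ)+2 from by omega),
            hpos ⟨((-1:ℤ)+2,(-1:ℤ)+2), by omega⟩ (show (0:ℤ) < (-1:ℤ)+2 from by omega),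
            if_neg (show ¬ l0 = ⟨((-1:ℤ),(-1:ℤ)),hba⟩ by rw [hl0]; exact wt_ne (by omega))] at hs
        rw [show (-((-1:ℤ)+1) - (-1)).toNat = 1 from by omega] at hs
        rw [show (-(-1:ℤ) - (-1)).toNat = 2 from by omega]
        linear_combination hs
      · -- b = 0 (base case)
        have hb0 : b = 0 := le_antisymm ha (by omega)
        subst hb0
        rw [hpos ⟨((0:ℤ)+1,(0:ℤ)), by omega⟩ (show (0:ℤ) < (0:ℤ)+1 from by omega),
            hpos ⟨((0:ℤ)+1,(0:ℤ)+1), by omega⟩ (show (0:ℤ) < (0:ℤ)+1 from by omega),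
            hpos ⟨((0:ℤ)+2,(0:ℤ)+1), by omega⟩ (show (0:ℤ) < (0:ℤ)+2 from by omega),
            hpos ⟨((0:ℤ)+2,(0:ℤ)+2), by omega⟩ (show (0:ℤ) < (0:ℤ)+2 from by omega),
            if_pos (show l0 = ⟨((0:ℤ),(0:ℤ)),hba⟩ by rw [hl0])] at hs
        rw [show (-(0:ℤ) - 0).toNat = 0 from by omega]
        linear_combination hs
    · -- off-diagonal case μ = (a,b), b < a
      have hs := hBA l0 ⟨(a,b), hba⟩
      rw [finsum_six _ ⟨(a,b),hba⟩ ⟨(a+1,b), by omega⟩ ⟨(a,b+1), by omega⟩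
            ⟨(a+1,b+1), by omega⟩ ⟨(a+2,b+1), by omega⟩ ⟨(a+2,b+2), by omega⟩
            (wt_ne (by omega)) (wt_ne (by omega)) (wt_ne (by omega)) (wt_ne (by omega))
            (wt_ne (by omega)) (wt_ne (by omega)) (wt_ne (by omega)) (wt_ne (by omega))
            (wt_ne (by omega)) (wt_ne (by omega)) (wt_ne (by omega)) (wt_ne (by omega))
            (wt_ne (by omega)) (wt_ne (by omega)) (wt_ne (by omega))
            (by
              intro ν hν
              rcases Aq22_support (right_ne_zero_of_mul hν) with h1|h1|h1|h1|h1|h1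
              · exact Or.inl (Subtype.ext h1)
              · exact Or.inr (Or.inl (Subtype.ext h1))
              · exact Or.inr (Or.inr (Or.inl (Subtype.ext h1)))
              · exact Or.inr (Or.inr (Or.inr (Or.inl (Subtype.ext h1))))
              · exact Or.inr (Or.inr (Or.inr (Or.inr (Or.inl (Subtype.ext h1)))))
              · exact Or.inr (Or.inr (Or.inr (Or.inr (Or.inr (Subtype.ext h1))))))] at hs
      rw [Aq_00, Aq_10, Aq_01 a b hlt, Aq_11 a b hlt, Aq_21lt a b hlt,
          Aq_22lt a b hlt,
          if_neg (show ¬ l0 = ⟨(a,b),hba⟩ by rw [hl0]; exact wt_ne (by omega))] at hs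
      rcases eq_or_lt_of_le ha with ha0 | ha1
      · -- a = 0, so b ≤ -1
        subst ha0
        rw [hpos ⟨((0:ℤ)+1,b), by omega⟩ (show (0:ℤ) < (0:ℤ)+1 from by omega),
            hpos ⟨((0:ℤ)+1,b+1), by omega⟩ (show (0:ℤ) < (0:ℤ)+1 from by omega),
            ih ((-6*(0:ℤ) - 2*(b+1)).toNat) (by omega) 0 (b+1) (by omega) (by omega)
              rfl] at hs
        rw [show (-(0:ℤ) - b).toNat = (-(0:ℤ) - (b+1)).toNat + 1 from by omega]
        linear_combination hs
      · -- a ≤ -1 : all by induction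
        rw [ih ((-6*(a+1) - 2*b).toNat) (by omega) (a+1) b (by omega) (by omega) rfl,
            ih ((-6*a - 2*(b+1)).toNat) (by omega) a (b+1) (by omega) (by omega) rfl,
            ih ((-6*(a+1) - 2*(b+1)).toNat) (by omega) (a+1) (b+1) (by omega) (by omega)
              rfl] at hs
        rw [show (-(a+1) - b).toNat = (-a-b-2).toNat + 1 from by omega,
            show (-a - (b+1)).toNat = (-a-b-2).toNat + 1 from by omega,
            show (-(a+1) - (b+1)).toNat = (-a-b-2).toNat from by omega] at hs
        rw [show (-a - b).toNat = (-a-b-2).toNat + 2 from by omega]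
        linear_combination hs
  constructor
  · intro x y hxy
    have hk := key ((-6*(-(x:ℤ)) - 2*(-(y:ℤ))).toNat) (-(x:ℤ)) (-(y:ℤ))
      (neg_le_neg (by exact_mod_cast hxy)) (by omega) rfl
    rw [show (-(-(x:ℤ)) - (-(y:ℤ))).toNat = x + y from by omega] at hk
    exact hk
  · intro μ hμ
    by_cases hA : 0 < μ.val.1
    · exact hpos _ hA
    · exfalso
      apply hμ
      refine ⟨(-μ.val.1).toNat, (-μ.val.2).toNat, by have := μ.property; omega, ?_⟩
      have := μ.property
      rw [Prod.ext_iff]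
      constructor <;> simp <;> omega
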